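/- Let H and K be complex Hilbert spaces, let A ∈ B(H) and B ∈ B(K) be bounded linear operators with σ(A) ∩ σ(B) = ∅, and let X ∈ B(K, H) be a bounded linear operator. If AX = XB, then X = 0. -/

import Mathlib

open ContinuousLinearMap Filter Bornology Topology

/-- **Rosenblum's corollary.** If `A ∈ B(H)` and `B ∈ B(K)` have disjoint spectra, then the
only bounded operator `X : K → H` with `AX = XB` is `X = 0`. -/
theorem eq_zero_of_comp_eq_comp_of_disjoint_spectrum
    {H K : Type*} [NormedAddCommGroup H] [InnerProductSpace ℂ H] [CompleteSpace H]
    [NormedAddCommGroup K] [InnerProductSpace ℂ K] [CompleteSpace K]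
    (A : H →L[ℂ] H) (B : K →L[ℂ] K) (X : K →L[ℂ] H)
    (hspec : spectrum ℂ A ∩ spectrum ℂ B = ∅)
    (hX : A ∘L X = X ∘L B) : X = 0 := by
  -- the intertwining identity for the shifted operators
  have h1 : ∀ z : ℂ, (algebraMap ℂ (H →L[ℂ] H) z - A) ∘L X
      = X ∘L (algebraMap ℂ (K →L[ℂ] K) z - B) := by
    intro z
    rw [ContinuousLinearMap.sub_comp, ContinuousLinearMap.comp_sub, hX]
    congr 1
    ext x
    simp [Algebra.algebraMap_eq_smul_one]
  -- the intertwining identity for resolvents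
  have key : ∀ z : ℂ, z ∈ resolventSet ℂ A → z ∈ resolventSet ℂ B →
      (resolvent A z) ∘L X = X ∘L (resolvent B z) := by
    intro z hA hB
    rw [spectrum.mem_resolventSet_iff] at hA hB
    have hA1 : resolvent A z ∘L (algebraMap ℂ (H →L[ℂ] H) z - A) = 1 :=
      Ring.inverse_mul_cancel _ hA
    have hB1 : (algebraMap ℂ (K →L[ℂ] K) z - B) ∘L resolvent B z = 1 :=
      Ring.mul_inverse_cancel _ hB
    calc (resolvent A z) ∘L X
        = (resolvent A z) ∘L (X ∘L ((algebraMap ℂ (K →L[ℂ] K) z - B) ∘L resolvent B z)) := by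
          rw [hB1]; rfl
      _ = (resolvent A z ∘L ((algebraMap ℂ (H →L[ℂ] H) z - A) ∘L X)) ∘L resolvent B z := by
          rw [h1]; simp [comp_assoc]
      _ = X ∘L resolvent B z := by rw [← comp_assoc, hA1]; rfl
  classical
  set F : ℂ → (K →L[ℂ] H) := fun z =>
    if z ∈ resolventSet ℂ A then resolvent A z ∘L X else X ∘L resolvent B z with hF
  have hFA : ∀ z ∈ resolventSet ℂ A, F z = resolvent A z ∘L X := fun z hz => if_pos hz
  have hFB : ∀ z ∈ resolventSet ℂ B, F z = X ∘L resolvent B z := by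
    intro z hz
    by_cases h : z ∈ resolventSet ℂ A
    · rw [hFA z h]; exact key z h hz
    · exact if_neg h
  have hBc : ∀ z : ℂ, z ∉ resolventSet ℂ A → z ∈ resolventSet ℂ B := by
    intro z hz
    by_contra h
    have hmem : z ∈ spectrum ℂ A ∩ spectrum ℂ B := ⟨hz, h⟩
    rw [hspec] at hmem
    exact hmem
  -- F is entire
  have hdiff : Differentiable ℂ F := by
    intro z
    by_cases hz : z ∈ resolventSet ℂ A
    · have : DifferentiableAt ℂ (fun w => resolvent A w ∘L X) z :=
        ((spectrum.hasDerivAt_resolvent hz).differentiableAt).clm_comp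
          (differentiableAt_const X)
      exact this.congr_of_eventuallyEq <|
        Filter.eventuallyEq_of_mem ((spectrum.isOpen_resolventSet A).mem_nhds hz)
          (fun w hw => hFA w hw)
    · have hzB := hBc z hz
      have : DifferentiableAt ℂ (fun w => X ∘L resolvent B w) z :=
        (differentiableAt_const X).clm_comp
          ((spectrum.hasDerivAt_resolvent hzB).differentiableAt)
      exact this.congr_of_eventuallyEq <|
        Filter.eventuallyEq_of_mem ((spectrum.isOpen_resolventSet B).mem_nhds hzB)
          (fun w hw => hFB w hw)
  -- F tends to 0 at infinity
  have htend : Tendsto F (cobounded ℂ) (𝓝 0) := by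
    have h1' : Tendsto (fun z => resolvent A z ∘L X) (cobounded ℂ) (𝓝 0) := by
      have hc : Continuous fun T : H →L[ℂ] H => T ∘L X :=
        ((ContinuousLinearMap.compL ℂ K H H).flip X).continuous
      have := (hc.tendsto 0).comp (spectrum.resolvent_tendsto_cobounded A (𝕜 := ℂ))
      simpa [Function.comp_def] using this
    refine h1'.congr' ?_ |>.mono_left le_rfl
    filter_upwards [eventually_cobounded_le_norm (‖A‖ * ‖(1 : H →L[ℂ] H)‖ + 1)] with z hz
    exact (hFA z (spectrum.mem_resolventSet_of_norm_lt_mul (by linarith))).symm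
  -- Liouville
  have hzero : ∀ z, F z = 0 :=
    fun z => hdiff.apply_eq_of_tendsto_cocompact z <| by
      simpa [Metric.cobounded_eq_cocompact] using htend
  -- conclude
  obtain ⟨z, hz⟩ : ∃ z : ℂ, z ∈ resolventSet ℂ A := by
    refine ⟨(‖A‖ * ‖(1 : H →L[ℂ] H)‖ + 1 : ℝ), spectrum.mem_resolventSet_of_norm_lt_mul ?_⟩
    rw [Complex.norm_real, Real.norm_eq_abs]
    have : (0:ℝ) ≤ ‖A‖ * ‖(1 : H →L[ℂ] H)‖ := by positivity
    rw [abs_of_nonneg (by linarith)]; linarith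
  have h0 : resolvent A z ∘L X = 0 := (hFA z hz).symm.trans (hzero z)
  rw [spectrum.mem_resolventSet_iff] at hz
  have hA1 : (algebraMap ℂ (H →L[ℂ] H) z - A) ∘L resolvent A z = 1 :=
    Ring.mul_inverse_cancel _ hz
  calc X = (1 : H →L[ℂ] H) ∘L X := rfl
    _ = ((algebraMap ℂ (H →L[ℂ] H) z - A) ∘L resolvent A z) ∘L X := by rw [hA1]
    _ = (algebraMap ℂ (H →L[ℂ] H) z - A) ∘L (resolvent A z ∘L X) := by rw [comp_assoc]
    _ = 0 := by rw [h0]; simp
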